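/- Let m ≥ 2 and define the m×m real matrix a as follows: for 1 ≤ j ≤ m−1, a_{jk} = 0 if j − k is even and a_{jk} = (−1)^{(j−k−1)/2}/(j−k) if j − k is odd; for the last row, a_{mk} = 0 if k is even and a_{mk} = (−1)^{(k−1)/2}/k if k is odd. Then det_m(a) = −det_{⌊m/2⌋}[ 1/(2j − 2k − 1) ]_{j,k=1}^{⌊m/2⌋} · det_{⌊(m+1)/2⌋}[ 1/(2j − 2k − 1) ]_{j,k=1}^{⌊(m+1)/2⌋}. -/

import Mathlib

open Finset Matrix

private lemma neg1z (z : ℤ) : (-1 : ℝ) ^ z = if Even z then 1 else -1 := by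
  rcases Int.even_or_odd z with h | h
  · rw [if_pos h, h.neg_one_zpow]
  · rw [if_neg (by simpa [Int.not_even_iff_odd] using h), h.neg_one_zpow]

private lemma prodsq (n : ℕ) :
    (∏ J : Fin n, (-1 : ℝ) ^ (J : ℕ)) * (∏ J : Fin n, (-1 : ℝ) ^ (J : ℕ)) = 1 := by
  rw [← Finset.prod_mul_distrib]
  refine Finset.prod_eq_one fun J _ => ?_
  rw [← pow_add]
  exact Even.neg_one_pow ⟨(J : ℕ), rfl⟩

private lemma pow2 (n : ℕ) : (-1 : ℝ) ^ n * (-1 : ℝ) ^ n = 1 := by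
  rw [← pow_add]; exact Even.neg_one_pow ⟨n, rfl⟩

private lemma detC (n : ℕ) :
    Matrix.det (Matrix.of fun J K : Fin n =>
        (-1 : ℝ) ^ ((J : ℤ) - (K : ℤ) - 1) / (2 * (J : ℕ) - 2 * (K : ℕ) - 1 : ℝ)) =
      (-1 : ℝ) ^ n *
        Matrix.det (Matrix.of fun j k : Fin n =>
          (1 : ℝ) / (2 * (j : ℕ) - 2 * (k : ℕ) - 1 : ℝ)) := by
  have h : (Matrix.of fun J K : Fin n =>
        (-1 : ℝ) ^ ((J : ℤ) - (K : ℤ) - 1) / (2 * (J : ℕ) - 2 * (K : ℕ) - 1 : ℝ)) =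
      Matrix.of fun J K : Fin n => (-1 : ℝ) ^ (J : ℕ) *
        (Matrix.of fun J K : Fin n => (-1 : ℝ) ^ (K : ℕ) *
          (-(Matrix.of fun j k : Fin n =>
            (1 : ℝ) / (2 * (j : ℕ) - 2 * (k : ℕ) - 1 : ℝ))) J K) J K := by
    ext J K
    simp only [Matrix.of_apply, Matrix.neg_apply, neg1z]
    rw [← mul_assoc, ← pow_add]
    rcases Nat.even_or_odd ((J : ℕ) + (K : ℕ)) with h | h
    · rw [if_neg, Even.neg_one_pow h]
      · ring
      · rw [Int.even_iff]; rw [Nat.even_iff] at h; omega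
    · rw [if_pos, Odd.neg_one_pow h]
      · ring
      · rw [Int.even_iff]; rw [Nat.odd_iff] at h; omega
  rw [h, Matrix.det_mul_column, Matrix.det_mul_row, Matrix.det_neg, Fintype.card_fin,
    ← mul_assoc, prodsq, one_mul]

private def Sfun (p q : ℕ) (hpq : p ≤ q) : Fin q ⊕ Fin p → Fin q ⊕ Fin p := fun x =>
  match x with
  | Sum.inl K => if h : (K : ℕ) < p then Sum.inr ⟨(K : ℕ), h⟩ else Sum.inl K
  | Sum.inr K => Sum.inl ⟨(K : ℕ), lt_of_lt_of_le K.isLt hpq⟩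

private lemma Sfun_invol (p q : ℕ) (hpq : p ≤ q) : Function.Involutive (Sfun p q hpq) := by
  rintro (K | K)
  · by_cases h : (K : ℕ) < p
    · simp only [Sfun, dif_pos h]
    · simp only [Sfun, dif_neg h]
  · simp only [Sfun, dif_pos K.isLt]

private def Sperm (p q : ℕ) (hpq : p ≤ q) : Equiv.Perm (Fin q ⊕ Fin p) :=
  Function.Involutive.toPerm _ (Sfun_invol p q hpq)

private lemma Sperm_apply (p q : ℕ) (hpq : p ≤ q) (x : Fin q ⊕ Fin p) :
    Sperm p q hpq x = Sfun p q hpq x := rfl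

private lemma Sperm_sign (p q : ℕ) (hp : 0 < p) (hpq : p ≤ q) :
    Equiv.Perm.sign (Sperm p q hpq) = (-1) ^ p := by
  classical
  have key : Equiv.Perm.sign (Sperm p q hpq) =
      Equiv.Perm.sign (Equiv.prodCongrRight fun _ : Fin p => Equiv.swap false true) := by
    apply Equiv.Perm.sign_bij
      (fun x _ => Sum.elim (fun K : Fin q => ((⟨(K : ℕ) % p, Nat.mod_lt _ hp⟩ : Fin p), false))
        (fun K : Fin p => (K, true)) x)
    · rintro (K | K) hx hx'
      · have h : (K : ℕ) < p := by
          by_contra h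
          exact hx (by simp [Sperm_apply, Sfun, dif_neg h])
        simp only [Sperm_apply, Sfun, dif_pos h, Sum.elim_inl, Sum.elim_inr,
          Equiv.prodCongrRight_apply, Equiv.swap_apply_left]
        refine Prod.ext ?_ rfl
        simp only []
        ext
        simp [Nat.mod_eq_of_lt h]
      · simp only [Sperm_apply, Sfun, Sum.elim_inl, Sum.elim_inr,
          Equiv.prodCongrRight_apply, Equiv.swap_apply_right]
        refine Prod.ext ?_ rfl
        ext
        simp [Nat.mod_eq_of_lt K.isLt]
    · rintro (K₁ | K₁) (K₂ | K₂) h₁ h₂ heq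
      · have ha : (K₁ : ℕ) < p := by
          by_contra h
          exact h₁ (by simp [Sperm_apply, Sfun, dif_neg h])
        have hb : (K₂ : ℕ) < p := by
          by_contra h
          exact h₂ (by simp [Sperm_apply, Sfun, dif_neg h])
        simp only [Sum.elim_inl, Prod.mk.injEq, Fin.mk.injEq] at heq
        rw [Nat.mod_eq_of_lt ha, Nat.mod_eq_of_lt hb] at heq
        exact congrArg Sum.inl (Fin.ext heq.1)
      · simp only [Sum.elim_inl, Sum.elim_inr, Prod.mk.injEq] at heq
        exact absurd heq.2 (by simp)
      · simp only [Sum.elim_inl, Sum.elim_inr, Prod.mk.injEq] at heq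
        exact absurd heq.2 (by simp)
      · simp only [Sum.elim_inr, Prod.mk.injEq] at heq
        exact congrArg Sum.inr heq.1
    · rintro ⟨K, b⟩ hy
      cases b
      · refine ⟨Sum.inl ⟨(K : ℕ), lt_of_lt_of_le K.isLt hpq⟩, ?_, ?_⟩
        · simp [Sperm_apply, Sfun, dif_pos K.isLt]
        · simp only [Sum.elim_inl, Prod.mk.injEq]
          exact ⟨Fin.ext (by simp [Nat.mod_eq_of_lt K.isLt]), trivial⟩
      · refine ⟨Sum.inr K, ?_, ?_⟩
        · simp [Sperm_apply, Sfun]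
        · simp
  rw [key, Equiv.Perm.sign_prodCongrRight]
  simp [Equiv.Perm.sign_swap (show (false : Bool) ≠ true by decide)]
private lemma detB (q : ℕ) (hq : 1 ≤ q) :
    Matrix.det (Matrix.of fun J K : Fin q =>
        if (J : ℕ) = q - 1 then (-1 : ℝ) ^ (K : ℕ) / (2 * (K : ℕ) + 1 : ℝ)
        else (-1 : ℝ) ^ ((J : ℤ) - (K : ℤ)) / (2 * (J : ℕ) - 2 * (K : ℕ) + 1 : ℝ)) =
      -Matrix.det (Matrix.of fun j k : Fin q =>
        (1 : ℝ) / (2 * (j : ℕ) - 2 * (k : ℕ) - 1 : ℝ)) := by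
  obtain ⟨n, rfl⟩ : ∃ n, q = n + 1 := ⟨q - 1, by omega⟩
  simp only [Nat.add_sub_cancel]
  set T : Matrix (Fin (n + 1)) (Fin (n + 1)) ℝ :=
    Matrix.of fun j k : Fin (n + 1) => (1 : ℝ) / (2 * (j : ℕ) - 2 * (k : ℕ) - 1 : ℝ) with hT
  have h : (Matrix.of fun J K : Fin (n + 1) =>
        if (J : ℕ) = n then (-1 : ℝ) ^ (K : ℕ) / (2 * (K : ℕ) + 1 : ℝ)
        else (-1 : ℝ) ^ ((J : ℤ) - (K : ℤ)) / (2 * (J : ℕ) - 2 * (K : ℕ) + 1 : ℝ)) =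
      Matrix.of fun J K : Fin (n + 1) =>
        (if (J : ℕ) = n then (1 : ℝ) else (-1 : ℝ) ^ (J : ℕ)) *
          (Matrix.of (fun J K : Fin (n + 1) => (-1 : ℝ) ^ (K : ℕ) *
            (Matrix.of (fun J K : Fin (n + 1) =>
              (if (J : ℕ) = n then (-1 : ℝ) else 1) *
                (T.submatrix (⇑(finRotate (n + 1))) id) J K)) J K)) J K := by
    ext J K
    simp only [Matrix.of_apply, Matrix.submatrix_apply, id_eq]
    by_cases hJ : (J : ℕ) = n
    · have hJ' : J = Fin.last n := Fin.ext (by simpa using hJ)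
      rw [if_pos hJ, if_pos hJ, if_pos hJ, hJ', finRotate_last, one_mul]
      have hT0 : T 0 K = 1 / (2 * ((0 : Fin (n + 1)) : ℕ) - 2 * (K : ℕ) - 1 : ℝ) := rfl
      rw [hT0, show (2 * (((0 : Fin (n + 1)) : ℕ) : ℝ) - 2 * (K : ℕ) - 1) =
        -(2 * (K : ℕ) + 1 : ℝ) by push_cast [Fin.val_zero]; ring, div_neg]
      ring
    · have hJn : (J : ℕ) < n := by have := J.isLt; omega
      rw [if_neg hJ, if_neg hJ, if_neg hJ, one_mul]
      have hrot : ((finRotate (n + 1)) J : ℕ) = (J : ℕ) + 1 := by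
        rw [finRotate_succ_apply]
        rw [Fin.val_add_one_of_lt]
        exact Fin.lt_iff_val_lt_val.mpr (by simpa [Fin.val_last] using hJn)
      have hTv : T ((finRotate (n + 1)) J) K =
          1 / (2 * ((J : ℕ) + 1) - 2 * (K : ℕ) - 1 : ℝ) := by
        show (1 : ℝ) / _ = _
        rw [hrot]
        push_cast
        ring_nf
      rw [hTv, neg1z]
      rw [← mul_assoc, ← pow_add]
      have hden : (2 * ((J : ℕ) + 1) - 2 * (K : ℕ) - 1 : ℝ) =
          (2 * (J : ℕ) - 2 * (K : ℕ) + 1 : ℝ) := by ring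
      rw [hden]
      rcases Nat.even_or_odd ((J : ℕ) + (K : ℕ)) with h | h
      · rw [if_pos, Even.neg_one_pow h]
        · ring
        · rw [Int.even_iff]; rw [Nat.even_iff] at h; omega
      · rw [if_neg, Odd.neg_one_pow h]
        · ring
        · rw [Int.even_iff]; rw [Nat.odd_iff] at h; omega
  rw [h, Matrix.det_mul_column, Matrix.det_mul_row, Matrix.det_mul_column, Matrix.det_permute,
    sign_finRotate]
  have hu : (∏ J : Fin (n + 1), (if (J : ℕ) = n then (-1 : ℝ) else 1)) = -1 := by
    rw [Fin.prod_univ_castSucc]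
    have h1 : ∀ J : Fin n, (if ((J.castSucc : Fin (n + 1)) : ℕ) = n then (-1 : ℝ) else 1) = 1 :=
      fun J => if_neg (by simpa using J.isLt.ne)
    simp only [h1, Finset.prod_const_one, one_mul]
    simp
  have hr : (∏ J : Fin (n + 1), (if (J : ℕ) = n then (1 : ℝ) else (-1 : ℝ) ^ (J : ℕ))) =
      ∏ J : Fin n, (-1 : ℝ) ^ (J : ℕ) := by
    rw [Fin.prod_univ_castSucc]
    have h1 : ∀ J : Fin n, (if ((J.castSucc : Fin (n + 1)) : ℕ) = n then (1 : ℝ)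
        else (-1 : ℝ) ^ ((J.castSucc : Fin (n + 1)) : ℕ)) = (-1 : ℝ) ^ (J : ℕ) := fun J => by
      rw [if_neg (by simpa using J.isLt.ne)]
      simp
    simp only [h1]
    simp
  have hc : (∏ K : Fin (n + 1), (-1 : ℝ) ^ (K : ℕ)) =
      (∏ J : Fin n, (-1 : ℝ) ^ (J : ℕ)) * (-1 : ℝ) ^ n := by
    rw [Fin.prod_univ_castSucc]
    simp
  rw [hu, hr, hc]
  have hcast : ((((-1 : ℤˣ) ^ n : ℤˣ) : ℤ) : ℝ) = (-1 : ℝ) ^ n := by push_cast; ring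
  rw [Nat.add_sub_cancel, hcast]
  have expand : (∏ J : Fin n, (-1 : ℝ) ^ (J : ℕ)) *
      (((∏ J : Fin n, (-1 : ℝ) ^ (J : ℕ)) * (-1 : ℝ) ^ n) * ((-1) * ((-1 : ℝ) ^ n * T.det))) =
      ((∏ J : Fin n, (-1 : ℝ) ^ (J : ℕ)) * (∏ J : Fin n, (-1 : ℝ) ^ (J : ℕ))) *
        (((-1 : ℝ) ^ n * (-1 : ℝ) ^ n) * (-T.det)) := by ring
  rw [expand, prodsq, pow2, one_mul, one_mul]

/-- Block factorization of the finite determinant representing `⟨σ₁⁺σ_{m+1}⁻⟩` for the XX chain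
(rows and columns are 1-indexed: row `j` of the paper is row `⟨j-1⟩ : Fin m` here). -/
theorem stmt12 (m : ℕ) (hm : 2 ≤ m) (A : Matrix (Fin m) (Fin m) ℝ)
    (hA : ∀ j k : Fin m, A j k =
      if (j : ℕ) + 1 < m then
        (if Even ((j : ℤ) - (k : ℤ)) then 0
          else (-1 : ℝ) ^ (((j : ℤ) - (k : ℤ) - 1) / 2) / ((((j : ℤ) - (k : ℤ)) : ℤ) : ℝ))
      else
        (if Even ((k : ℕ) + 1) then 0
          else (-1 : ℝ) ^ (((k : ℕ) : ℕ) / 2) / (((k : ℕ) + 1 : ℕ) : ℝ))) :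
    A.det =
      -(Matrix.det (Matrix.of fun j k : Fin (m / 2) =>
          (1 : ℝ) / (2 * (j : ℕ) - 2 * (k : ℕ) - 1 : ℝ))) *
        Matrix.det (Matrix.of fun j k : Fin ((m + 1) / 2) =>
          (1 : ℝ) / (2 * (j : ℕ) - 2 * (k : ℕ) - 1 : ℝ)) := by
  classical
  set p := m / 2 with hpdef
  set q := (m + 1) / 2 with hqdef
  have hp1 : 0 < p := by omega
  have hq1 : 1 ≤ q := by omega
  have hpq : p ≤ q := by omega
  -- the row reordering
  obtain ⟨e, he1, he2⟩ : ∃ e : Fin q ⊕ Fin p ≃ Fin m,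
      (∀ J : Fin q, ((e (Sum.inl J)) : ℕ) = min (2 * (J : ℕ) + 1) (m - 1)) ∧
      (∀ J : Fin p, ((e (Sum.inr J)) : ℕ) = 2 * (J : ℕ)) := by
    have hEbij : Function.Bijective (Sum.elim
        (fun J : Fin q => (⟨min (2 * (J : ℕ) + 1) (m - 1), by have := J.isLt; omega⟩ : Fin m))
        (fun J : Fin p => (⟨2 * (J : ℕ), by have := J.isLt; omega⟩ : Fin m))) := by
      rw [Fintype.bijective_iff_injective_and_card]
      constructor
      · rintro (J | J) (J' | J') h <;>
          simp only [Sum.elim_inl, Sum.elim_inr, Fin.mk.injEq] at h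
        · exact congrArg Sum.inl (Fin.ext (by have := J.isLt; have := J'.isLt; omega))
        · exact absurd h (by have := J.isLt; have := J'.isLt; omega)
        · exact absurd h (by have := J.isLt; have := J'.isLt; omega)
        · exact congrArg Sum.inr (Fin.ext (by omega))
      · simp only [Fintype.card_sum, Fintype.card_fin]
        omega
    exact ⟨Equiv.ofBijective _ hEbij, fun J => rfl, fun J => rfl⟩
  -- the column reordering
  obtain ⟨f, hf1, hf2⟩ : ∃ f : Fin q ⊕ Fin p ≃ Fin m,
      (∀ K : Fin q, ((f (Sum.inl K)) : ℕ) = 2 * (K : ℕ)) ∧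
      (∀ K : Fin p, ((f (Sum.inr K)) : ℕ) = 2 * (K : ℕ) + 1) := by
    have hFbij : Function.Bijective (Sum.elim
        (fun K : Fin q => (⟨2 * (K : ℕ), by have := K.isLt; omega⟩ : Fin m))
        (fun K : Fin p => (⟨2 * (K : ℕ) + 1, by have := K.isLt; omega⟩ : Fin m))) := by
      rw [Fintype.bijective_iff_injective_and_card]
      constructor
      · rintro (K | K) (K' | K') h <;>
          simp only [Sum.elim_inl, Sum.elim_inr, Fin.mk.injEq] at h
        · exact congrArg Sum.inl (Fin.ext (by omega))
        · exact absurd h (by omega)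
        · exact absurd h (by omega)
        · exact congrArg Sum.inr (Fin.ext (by omega))
      · simp only [Fintype.card_sum, Fintype.card_fin]
        omega
    exact ⟨Equiv.ofBijective _ hFbij, fun K => rfl, fun K => rfl⟩
  -- relation between the two reorderings
  have hef : ∀ x, e ((Sperm p q hpq) x) = f x := by
    rintro (K | K)
    · by_cases h : (K : ℕ) < p
      · rw [Sperm_apply]
        simp only [Sfun, dif_pos h]
        apply Fin.ext
        rw [he2, hf1]
      · rw [Sperm_apply]
        simp only [Sfun, dif_neg h]
        apply Fin.ext
        rw [he1, hf1]
        have := K.isLt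
        omega
    · rw [Sperm_apply]
      simp only [Sfun]
      apply Fin.ext
      rw [he1, hf2]
      show min (2 * (K : ℕ) + 1) (m - 1) = 2 * (K : ℕ) + 1
      have := K.isLt
      omega
  -- the block decomposition
  have hblock : A.submatrix ⇑e ⇑f = Matrix.fromBlocks
      (Matrix.of fun J K : Fin q =>
        if (J : ℕ) = q - 1 then (-1 : ℝ) ^ (K : ℕ) / (2 * (K : ℕ) + 1 : ℝ)
        else (-1 : ℝ) ^ ((J : ℤ) - (K : ℤ)) / (2 * (J : ℕ) - 2 * (K : ℕ) + 1 : ℝ)) 0 0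
      (Matrix.of fun J K : Fin p =>
        (-1 : ℝ) ^ ((J : ℤ) - (K : ℤ) - 1) / (2 * (J : ℕ) - 2 * (K : ℕ) - 1 : ℝ)) := by
    ext x y
    rcases x with J | J <;> rcases y with K | K
    · rw [Matrix.submatrix_apply, Matrix.fromBlocks_apply₁₁, hA, Matrix.of_apply]
      by_cases hJ : (J : ℕ) = q - 1
      · rw [show ((e (Sum.inl J)) : ℕ) = m - 1 from by rw [he1]; have := J.isLt; omega, hf1,
          if_neg (by omega), if_pos hJ,
          if_neg (show ¬ Even (2 * (K : ℕ) + 1) from by rw [Nat.even_iff]; omega),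
          show 2 * (K : ℕ) / 2 = (K : ℕ) from by omega]
        push_cast
        ring
      · rw [show ((e (Sum.inl J)) : ℕ) = 2 * (J : ℕ) + 1 from by rw [he1]; have := J.isLt; omega,
          hf1, if_pos (by have := J.isLt; omega), if_neg hJ,
          if_neg (show ¬ Even (((2 * (J : ℕ) + 1 : ℕ) : ℤ) - ((2 * (K : ℕ) : ℕ) : ℤ)) from by
            rw [Int.even_iff]; omega),
          show (((2 * (J : ℕ) + 1 : ℕ) : ℤ) - ((2 * (K : ℕ) : ℕ) : ℤ) - 1) / 2
              = (J : ℤ) - (K : ℤ) from by omega]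
        congr 1
        push_cast
        ring
    · rw [Matrix.submatrix_apply, Matrix.fromBlocks_apply₁₂, Matrix.zero_apply, hA]
      by_cases hJ : (J : ℕ) = q - 1
      · rw [show ((e (Sum.inl J)) : ℕ) = m - 1 from by rw [he1]; have := J.isLt; omega, hf2,
          if_neg (by omega),
          if_pos (show Even (2 * (K : ℕ) + 1 + 1) from by rw [Nat.even_iff]; omega)]
      · rw [show ((e (Sum.inl J)) : ℕ) = 2 * (J : ℕ) + 1 from by rw [he1]; have := J.isLt; omega,
          hf2, if_pos (by have := J.isLt; omega),
          if_pos (show Even (((2 * (J : ℕ) + 1 : ℕ) : ℤ) - ((2 * (K : ℕ) + 1 : ℕ) : ℤ)) from by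
            rw [Int.even_iff]; omega)]
    · rw [Matrix.submatrix_apply, Matrix.fromBlocks_apply₂₁, Matrix.zero_apply, hA,
        he2, hf1, if_pos (by have := J.isLt; omega),
        if_pos (show Even (((2 * (J : ℕ) : ℕ) : ℤ) - ((2 * (K : ℕ) : ℕ) : ℤ)) from by
          rw [Int.even_iff]; omega)]
    · rw [Matrix.submatrix_apply, Matrix.fromBlocks_apply₂₂, hA, Matrix.of_apply,
        he2, hf2, if_pos (by have := J.isLt; omega),
        if_neg (show ¬ Even (((2 * (J : ℕ) : ℕ) : ℤ) - ((2 * (K : ℕ) + 1 : ℕ) : ℤ)) from by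
          rw [Int.even_iff]; omega),
        show (((2 * (J : ℕ) : ℕ) : ℤ) - ((2 * (K : ℕ) + 1 : ℕ) : ℤ) - 1) / 2
            = (J : ℤ) - (K : ℤ) - 1 from by omega]
      congr 1
      push_cast
      ring
  -- determinant bookkeeping
  have hdet1 : (A.submatrix ⇑e ⇑f).det =
      (((Equiv.Perm.sign (Sperm p q hpq) : ℤ)) : ℝ) * A.det := by
    have hsub : A.submatrix ⇑e ⇑f =
        (A.submatrix ⇑e ⇑e).submatrix id ⇑(Sperm p q hpq) := by
      ext i j
      rw [Matrix.submatrix_apply, Matrix.submatrix_apply, Matrix.submatrix_apply, id_eq, hef j]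
    rw [hsub, Matrix.det_permute', Matrix.det_submatrix_equiv_self]
  have hsc : (((Equiv.Perm.sign (Sperm p q hpq) : ℤ)) : ℝ) = (-1 : ℝ) ^ p := by
    rw [Sperm_sign p q hp1 hpq]
    push_cast
    ring
  have hX : (A.submatrix ⇑e ⇑f).det = (-1 : ℝ) ^ p * A.det := by rw [hdet1, hsc]
  have hY : (A.submatrix ⇑e ⇑f).det =
      (Matrix.of fun J K : Fin q =>
        if (J : ℕ) = q - 1 then (-1 : ℝ) ^ (K : ℕ) / (2 * (K : ℕ) + 1 : ℝ)
        else (-1 : ℝ) ^ ((J : ℤ) - (K : ℤ)) / (2 * (J : ℕ) - 2 * (K : ℕ) + 1 : ℝ)).det *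
      (Matrix.of fun J K : Fin p =>
        (-1 : ℝ) ^ ((J : ℤ) - (K : ℤ) - 1) / (2 * (J : ℕ) - 2 * (K : ℕ) - 1 : ℝ)).det := by
    rw [hblock, Matrix.det_fromBlocks_zero₁₂]
  have h3 : (-1 : ℝ) ^ p * A.det =
      (Matrix.of fun J K : Fin q =>
        if (J : ℕ) = q - 1 then (-1 : ℝ) ^ (K : ℕ) / (2 * (K : ℕ) + 1 : ℝ)
        else (-1 : ℝ) ^ ((J : ℤ) - (K : ℤ)) / (2 * (J : ℕ) - 2 * (K : ℕ) + 1 : ℝ)).det *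
      (Matrix.of fun J K : Fin p =>
        (-1 : ℝ) ^ ((J : ℤ) - (K : ℤ) - 1) / (2 * (J : ℕ) - 2 * (K : ℕ) - 1 : ℝ)).det := by
    rw [← hX]
    exact hY
  rw [detB q hq1, detC p] at h3
  have h4 := pow2 p
  linear_combination ((-1 : ℝ) ^ p) * h3 -
    (A.det + (Matrix.det (Matrix.of fun j k : Fin q =>
        (1 : ℝ) / (2 * (j : ℕ) - 2 * (k : ℕ) - 1 : ℝ))) *
      (Matrix.det (Matrix.of fun j k : Fin p =>
        (1 : ℝ) / (2 * (j : ℕ) - 2 * (k : ℕ) - 1 : ℝ)))) * h4
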